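/- Let u and v be T-sequences in groups G and H respectively. Define the sequence d in G × H by d_{2n+1} = (u_n, e_H) and d_{2n} = (e_G, v_n). Then d is a T-sequence in G × H and τ_d = τ_u × τ_v, i.e., the finest Hausdorff group topology on G × H in which d converges to the identity is the product of the finest topologies for u and v. -/

import Mathlib

open Filter Topology Pointwise

/-- `u` converges to the identity in the group topology `t`. -/
def TendstoOne {G : Type*} [Group G] (t : GroupTopology G) (u : ℕ → G) : Prop :=
  Filter.Tendsto u Filter.atTop (@nhds G t.toTopologicalSpace 1)

/-- The group topology `t` is Hausdorff. -/
def IsHausdorffGT {G : Type*} [Group G] (t : GroupTopology G) : Prop :=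
  @T2Space G t.toTopologicalSpace

/-- `S` is a `T_s`-set of sequences: some Hausdorff group topology makes every
sequence of `S` converge to the identity. -/
def IsTsSet {G : Type*} [Group G] (S : Set (ℕ → G)) : Prop :=
  ∃ t : GroupTopology G, IsHausdorffGT t ∧ ∀ u ∈ S, TendstoOne t u

/-- `τ` is the finest Hausdorff group topology on `G` in which every sequence of `S`
converges to the identity (recall that in Mathlib's order on topologies, finer = smaller). -/
def IsTauS {G : Type*} [Group G] (S : Set (ℕ → G)) (τ : GroupTopology G) : Prop :=
  IsHausdorffGT τ ∧ (∀ u ∈ S, TendstoOne τ u) ∧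
    ∀ t : GroupTopology G, IsHausdorffGT t → (∀ u ∈ S, TendstoOne t u) → τ ≤ t

/-- The given topological-group structure on `G`, as a term of `GroupTopology G`. -/
def ambientGT (G : Type*) [Group G] [τ : TopologicalSpace G] [h : IsTopologicalGroup G] :
    GroupTopology G := ⟨τ, h⟩

/-- The set of all sequences converging to the identity in a group topology. -/
def SeqConvOne {G : Type*} [Group G] (t : GroupTopology G) : Set (ℕ → G) :=
  {u | TendstoOne t u}

/-- `(G, τ)` is an `s`-group: its topology is the finest Hausdorff group topology in which
every member of some `T_s`-set of sequences converges to the identity. -/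
def IsSGroup (G : Type*) [Group G] [TopologicalSpace G] [IsTopologicalGroup G] [T2Space G] :
    Prop :=
  ∃ S : Set (ℕ → G), IsTauS S (ambientGT G)

section Aux

open Filter

variable {G H : Type*} [Group G] [Group H]

/-- Interleaving lemma: if both interleaved subsequences tend to 1, so does `d`. -/
theorem interleave_tendsto (u : ℕ → G) (v : ℕ → H) (d : ℕ → G × H)
    (hd : ∀ n : ℕ, d (2 * n + 1) = (u n, 1) ∧ d (2 * n) = (1, v n))
    (tt : TopologicalSpace (G × H))
    (h1 : Filter.Tendsto (fun n => ((u n, 1) : G × H)) atTop (@nhds _ tt 1))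
    (h2 : Filter.Tendsto (fun n => ((1, v n) : G × H)) atTop (@nhds _ tt 1)) :
    Filter.Tendsto d atTop (@nhds _ tt 1) := by
  rw [Filter.tendsto_atTop'] at h1 h2 ⊢
  intro s hs
  obtain ⟨N1, hN1⟩ := h1 s hs
  obtain ⟨N2, hN2⟩ := h2 s hs
  refine ⟨2 * max N1 N2 + 1, fun n hn => ?_⟩
  rcases Nat.even_or_odd n with ⟨k, hk⟩ | ⟨k, hk⟩
  · have hk' : n = 2 * k := by omega
    rw [hk', (hd k).2]
    exact hN2 k (by omega)
  · rw [hk, (hd k).1]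
    exact hN1 k (by omega)

/-- the sequence `n ↦ d (2n+1)` tends to 1 if `d` does. -/
theorem sub_tendsto (d : ℕ → G × H) (tt : TopologicalSpace (G × H)) (c : ℕ → ℕ)
    (hc : Filter.Tendsto c atTop atTop)
    (htd : Filter.Tendsto d atTop (@nhds _ tt 1)) :
    Filter.Tendsto (fun n => d (c n)) atTop (@nhds _ tt 1) :=
  htd.comp hc

end Aux
/-- if `u` and `v` are `T`-sequences in `G` and `H` with finest topologies
`τ_u` and `τ_v`, then the interleaved sequence `d` in `G × H` with `d (2n+1) = (u n, 1)` and
`d (2n) = (1, v n)` is a `T`-sequence, and `τ_d = τ_u × τ_v`: the product topology is the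
finest Hausdorff group topology on `G × H` in which `d` converges to the identity. -/
theorem stmt16 {G H : Type*} [Group G] [Group H]
    (u : ℕ → G) (v : ℕ → H) (τu : GroupTopology G) (τv : GroupTopology H)
    (hu : IsTauS {u} τu) (hv : IsTauS {v} τv)
    (d : ℕ → G × H)
    (hd : ∀ n : ℕ, d (2 * n + 1) = (u n, 1) ∧ d (2 * n) = (1, v n))
    (τp : GroupTopology (G × H))
    (hτp : τp.toTopologicalSpace =
      @instTopologicalSpaceProd G H τu.toTopologicalSpace τv.toTopologicalSpace) :
    IsTsSet {d} ∧ IsTauS {d} τp := by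
  obtain ⟨huH, huT, huMax⟩ := hu
  obtain ⟨hvH, hvT, hvMax⟩ := hv
  have hut : Filter.Tendsto u Filter.atTop (@nhds G τu.toTopologicalSpace 1) :=
    huT u rfl
  have hvt : Filter.Tendsto v Filter.atTop (@nhds H τv.toTopologicalSpace 1) :=
    hvT v rfl
  -- τp is Hausdorff
  have hpH : IsHausdorffGT τp := by
    show @T2Space _ τp.toTopologicalSpace
    rw [hτp]
    letI := τu.toTopologicalSpace
    letI := τv.toTopologicalSpace
    haveI : T2Space G := huH
    haveI : T2Space H := hvH
    exact Prod.t2Space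
  -- d → 1 in τp
  have hdp : TendstoOne τp d := by
    refine interleave_tendsto u v d hd τp.toTopologicalSpace ?_ ?_
    · rw [hτp]
      letI := τu.toTopologicalSpace
      letI := τv.toTopologicalSpace
      have : @nhds (G × H) instTopologicalSpaceProd 1 = nhds ((1 : G), (1 : H)) := rfl
      rw [this, nhds_prod_eq]
      exact hut.prodMk tendsto_const_nhds
    · rw [hτp]
      letI := τu.toTopologicalSpace
      letI := τv.toTopologicalSpace
      have : @nhds (G × H) instTopologicalSpaceProd 1 = nhds ((1 : G), (1 : H)) := rfl
      rw [this, nhds_prod_eq]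
      exact tendsto_const_nhds.prodMk hvt
  -- maximality
  have hmax : ∀ t : GroupTopology (G × H), IsHausdorffGT t →
      TendstoOne t d → τp ≤ t := by
    intro t htH htd
    letI tt : TopologicalSpace (G × H) := t.toTopologicalSpace
    haveI htg : @IsTopologicalGroup (G × H) tt _ := t.toIsTopologicalGroup
    haveI ht2 : @T2Space (G × H) tt := htH
    -- odd / even subsequences
    have hodd : Filter.Tendsto (fun n => ((u n, 1) : G × H)) Filter.atTop (@nhds _ tt 1) := by
      have h := sub_tendsto d tt (fun n => 2 * n + 1)
        (Filter.tendsto_atTop_atTop.2 fun b => ⟨b, fun a ha => by omega⟩) htd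
      have he : (fun n => d (2 * n + 1)) = fun n => ((u n, 1) : G × H) :=
        funext fun n => (hd n).1
      rwa [he] at h
    have heven : Filter.Tendsto (fun n => ((1, v n) : G × H)) Filter.atTop (@nhds _ tt 1) := by
      have h := sub_tendsto d tt (fun n => 2 * n)
        (Filter.tendsto_atTop_atTop.2 fun b => ⟨b, fun a ha => by omega⟩) htd
      have he : (fun n => d (2 * n)) = fun n => ((1, v n) : G × H) :=
        funext fun n => (hd n).2
      rwa [he] at h
    -- induced group topologies on G and H
    letI tGs : TopologicalSpace G := TopologicalSpace.induced (MonoidHom.inl G H) tt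
    letI tHs : TopologicalSpace H := TopologicalSpace.induced (MonoidHom.inr G H) tt
    haveI hgG : @IsTopologicalGroup G tGs _ := topologicalGroup_induced (MonoidHom.inl G H)
    haveI hgH : @IsTopologicalGroup H tHs _ := topologicalGroup_induced (MonoidHom.inr G H)
    let tG : GroupTopology G := ⟨tGs, hgG⟩
    let tH : GroupTopology H := ⟨tHs, hgH⟩
    have hG2 : IsHausdorffGT tG := by
      show @T2Space G tGs
      exact @Topology.IsEmbedding.t2Space G (G × H) tGs tt ht2 _
        ⟨⟨rfl⟩, fun a b hab => by simpa using congrArg Prod.fst hab⟩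
    have hH2 : IsHausdorffGT tH := by
      show @T2Space H tHs
      exact @Topology.IsEmbedding.t2Space H (G × H) tHs tt ht2 _
        ⟨⟨rfl⟩, fun a b hab => by simpa using congrArg Prod.snd hab⟩
    have hGt : TendstoOne tG u := by
      show Filter.Tendsto u Filter.atTop (@nhds G tGs 1)
      rw [nhds_induced]
      rw [Filter.tendsto_comap_iff]
      exact hodd
    have hHt : TendstoOne tH v := by
      show Filter.Tendsto v Filter.atTop (@nhds H tHs 1)
      rw [nhds_induced]
      rw [Filter.tendsto_comap_iff]
      exact heven
    have hle1 : τu.toTopologicalSpace ≤ tGs :=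
      GroupTopology.toTopologicalSpace_le.2 (huMax tG hG2 (fun w hw => by rw [hw]; exact hGt))
    have hle2 : τv.toTopologicalSpace ≤ tHs :=
      GroupTopology.toTopologicalSpace_le.2 (hvMax tH hH2 (fun w hw => by rw [hw]; exact hHt))
    -- continuity of the two inclusions
    have hc1 : @Continuous G (G × H) τu.toTopologicalSpace tt (fun g => ((g, 1) : G × H)) := by
      rw [continuous_iff_le_induced]
      exact hle1
    have hc2 : @Continuous H (G × H) τv.toTopologicalSpace tt (fun h => ((1, h) : G × H)) := by
      rw [continuous_iff_le_induced]
      exact hle2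
    rw [← GroupTopology.toTopologicalSpace_le, hτp]
    rw [← continuous_id_iff_le]
    letI tp : TopologicalSpace (G × H) :=
      @instTopologicalSpaceProd G H τu.toTopologicalSpace τv.toTopologicalSpace
    have hfst : @Continuous (G × H) G tp τu.toTopologicalSpace Prod.fst :=
      @continuous_fst G H τu.toTopologicalSpace τv.toTopologicalSpace
    have hsnd : @Continuous (G × H) H tp τv.toTopologicalSpace Prod.snd :=
      @continuous_snd G H τu.toTopologicalSpace τv.toTopologicalSpace
    have hA : @Continuous (G × H) (G × H) tp tt
        ((fun g : G => ((g, 1) : G × H)) ∘ Prod.fst) :=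
      @Continuous.comp (G × H) G (G × H) tp τu.toTopologicalSpace tt _ _ hc1 hfst
    have hB : @Continuous (G × H) (G × H) tp tt
        ((fun h : H => ((1, h) : G × H)) ∘ Prod.snd) :=
      @Continuous.comp (G × H) H (G × H) tp τv.toTopologicalSpace tt _ _ hc2 hsnd
    have hmul : @Continuous (G × H) (G × H) tp tt
        (fun p => ((fun g : G => ((g, 1) : G × H)) ∘ Prod.fst) p *
          ((fun h : H => ((1, h) : G × H)) ∘ Prod.snd) p) :=
      @Continuous.mul (G × H) tt _ htg.toContinuousMul (G × H) tp _ _ hA hB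
    have heq : (fun p : (G × H) => ((fun g : G => ((g, 1) : G × H)) ∘ Prod.fst) p *
          ((fun h : H => ((1, h) : G × H)) ∘ Prod.snd) p) = id := by
      funext p
      simp [Prod.ext_iff]
    rwa [heq] at hmul
  refine ⟨⟨τp, hpH, fun w hw => by rw [hw]; exact hdp⟩,
    hpH, fun w hw => by rw [hw]; exact hdp, fun t htH htd => hmax t htH (htd d rfl)⟩
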